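/- Let f be analytic on an open set containing the closed disk of center c ∈ ℂ and radius R' with R' > R > 0, with |f(z)| ≤ M on the circle |z − c| = τR for some 1 < τ ≤ R'/R. Let A ∈ ℂ^{n×n} be banded with upper bandwidth β ≥ 1 and lower bandwidth γ ≥ 1, and suppose ‖((A − cI)/R)^j‖ ≤ 2 for all j ≥ 0 (e.g., when the field of values of A is contained in the disk of center c, radius R). Writing f(z) = ∑_j f_j ((z−c)/R)^j with f_j the Taylor coefficients of z ↦ f(c + Rz) at 0, one has for k ≠ ℓ: |(f(A))_{k,ℓ}| ≤ 2 (τ/(τ−1)) M (1/τ)^ξ, with ξ = ⌈(ℓ−k)/β⌉ if k < ℓ and ξ = ⌈(k−ℓ)/γ⌉ otherwise. -/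

import Mathlib

open scoped Matrix.Norms.L2Operator

lemma entry_norm_le_l2 {n : ℕ} (M : Matrix (Fin n) (Fin n) ℂ) (k ℓ : Fin n) :
    ‖M k ℓ‖ ≤ ‖M‖ := by
  set x : EuclideanSpace ℂ (Fin n) := EuclideanSpace.single ℓ 1 with hx
  have h1 : ‖(EuclideanSpace.equiv (Fin n) ℂ).symm (M.mulVec x)‖ ≤ ‖M‖ * ‖x‖ :=
    Matrix.l2_opNorm_mulVec M x
  have hxn : ‖x‖ = 1 := by simp [hx, EuclideanSpace.norm_single]
  set v : EuclideanSpace ℂ (Fin n) := (EuclideanSpace.equiv (Fin n) ℂ).symm (M.mulVec x) with hv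
  have hvk : v k = M k ℓ := by
    simp [hv, hx, Matrix.mulVec, dotProduct, EuclideanSpace.single_apply,
      mul_ite, mul_one, mul_zero]
  have h2 : ‖v k‖ ≤ ‖v‖ := by
    have := norm_inner_le_norm (𝕜 := ℂ) (EuclideanSpace.single k (1:ℂ)) v
    simpa [EuclideanSpace.inner_single_left, EuclideanSpace.norm_single] using this
  calc ‖M k ℓ‖ = ‖v k‖ := by rw [hvk]
    _ ≤ ‖v‖ := h2
    _ ≤ ‖M‖ * ‖x‖ := h1
    _ = ‖M‖ := by rw [hxn, mul_one]

lemma band_pow_zero {n : ℕ} (B : Matrix (Fin n) (Fin n) ℂ) (β γ : ℕ)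
    (h : ∀ k ℓ : Fin n, ((ℓ : ℕ) - (k : ℕ) > β ∨ (k : ℕ) - (ℓ : ℕ) > γ) → B k ℓ = 0) :
    ∀ (j : ℕ) (k ℓ : Fin n),
      ((ℓ : ℕ) - (k : ℕ) > j * β ∨ (k : ℕ) - (ℓ : ℕ) > j * γ) → (B ^ j) k ℓ = 0 := by
  intro j
  induction j with
  | zero =>
    intro k ℓ hkl
    have : k ≠ ℓ := by rintro rfl; omega
    simp [Matrix.one_apply_ne this]
  | succ j ih =>
    intro k ℓ hkl
    rw [pow_succ, Matrix.mul_apply]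
    refine Finset.sum_eq_zero fun m _ => ?_
    by_cases hm : ((ℓ : ℕ) - (m : ℕ) > β ∨ (m : ℕ) - (ℓ : ℕ) > γ)
    · rw [h m ℓ hm, mul_zero]
    · push_neg at hm
      obtain ⟨h1, h2⟩ := hm
      rw [ih k m ?_, zero_mul]
      rcases hkl with hkl | hkl
      · left
        have e : (j+1)*β = j*β + β := by ring
        rw [e] at hkl
        generalize j * β = e at *
        omega
      · right
        have e : (j+1)*γ = j*γ + γ := by ring
        rw [e] at hkl
        generalize j * γ = e at *
        omega

set_option maxHeartbeats 1000000 in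
/-- Decay bound for `f(A)` when the field of values of the banded matrix `A` lies in the
disk `{|z-c| ≤ R}` (so that `‖((A-cI)/R)^j‖ ≤ 2`), `f` is analytic on a neighborhood of the
closed disk of radius `R' > R` and `|f| ≤ M` on the circle `|z-c| = τR`, `1 < τ ≤ R'/R`:
for `k ≠ ℓ`, `|(f(A))_{k,ℓ}| ≤ 2 (τ/(τ-1)) M (1/τ)^ξ`. -/
theorem stmt_19 {n : ℕ} (f : ℂ → ℂ) (c : ℂ) (R R' τ M : ℝ)
    (hR : 0 < R) (hR' : R < R')
    (hf : AnalyticOnNhd ℂ f (Metric.closedBall c R'))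
    (hτ : 1 < τ) (hτR : τ ≤ R' / R)
    (hM : ∀ z : ℂ, ‖z - c‖ = τ * R → ‖f z‖ ≤ M)
    (A : Matrix (Fin n) (Fin n) ℂ) (β γ : ℕ) (hβ : 1 ≤ β) (hγ : 1 ≤ γ)
    (hband : ∀ k ℓ : Fin n, ((ℓ : ℕ) - (k : ℕ) > β ∨ (k : ℕ) - (ℓ : ℕ) > γ) → A k ℓ = 0)
    (B : Matrix (Fin n) (Fin n) ℂ)
    (hB : B = ((R : ℂ))⁻¹ • (A - c • (1 : Matrix (Fin n) (Fin n) ℂ)))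
    (hpow : ∀ j : ℕ, ‖B ^ j‖ ≤ 2)
    (fj : ℕ → ℂ)
    (hfj : ∀ j : ℕ, fj j = iteratedDeriv j (fun z : ℂ => f (c + (R : ℂ) * z)) 0 / j.factorial)
    (F : Matrix (Fin n) (Fin n) ℂ)
    (hF : HasSum (fun j : ℕ => fj j • B ^ j) F)
    (k ℓ : Fin n) (hkl : k ≠ ℓ)
    (ξ : ℕ)
    (hξ : ξ = if (k : ℕ) < (ℓ : ℕ) then ((ℓ : ℕ) - (k : ℕ)) ⌈/⌉ β
              else ((k : ℕ) - (ℓ : ℕ)) ⌈/⌉ γ) :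
    ‖F k ℓ‖ ≤ 2 * (τ / (τ - 1)) * M * (1 / τ) ^ ξ := by
  have hτ0 : (0:ℝ) < τ := lt_trans one_pos hτ
  have hτR' : τ * R ≤ R' := by
    rw [le_div_iff₀ hR] at hτR; exact hτR
  set g : ℂ → ℂ := fun z => f (c + (R:ℂ) * z) with hg
  -- M is nonnegative
  have hM0 : 0 ≤ M := by
    refine le_trans (norm_nonneg _) (hM (c + (↑(τ * R) : ℂ)) ?_)
    rw [add_sub_cancel_left, Complex.norm_real, Real.norm_eq_abs, abs_of_pos (by positivity)]
  -- differentiability of g on the relevant ball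
  have hdiff : ∀ z : ℂ, ‖z‖ ≤ τ → DifferentiableAt ℂ g z := by
    intro z hz
    have hmem : c + (R:ℂ) * z ∈ Metric.closedBall c R' := by
      rw [Metric.mem_closedBall, dist_eq_norm, add_sub_cancel_left]
      calc ‖(R:ℂ) * z‖ = R * ‖z‖ := by
            rw [norm_mul, Complex.norm_real,
              Real.norm_of_nonneg hR.le]
        _ ≤ R * τ := by nlinarith
        _ ≤ R' := by nlinarith
    have h1 : DifferentiableAt ℂ f (c + (R:ℂ) * z) := (hf _ hmem).differentiableAt
    exact h1.comp z (by fun_prop)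
  -- power series of g at 0 with radius τ
  set τ' : NNReal := ⟨τ, hτ0.le⟩ with hτ'
  have hτ'c : ((τ' : NNReal) : ℝ) = τ := rfl
  have hdo : DifferentiableOn ℂ g (Metric.closedBall (0:ℂ) (τ':ℝ)) := by
    intro z hz
    refine (hdiff z ?_).differentiableWithinAt
    simpa [Metric.mem_closedBall, Complex.dist_eq, hτ'c] using hz
  have hps : HasFPowerSeriesOnBall g (cauchyPowerSeries g 0 τ') 0 τ' :=
    hdo.hasFPowerSeriesOnBall (by exact_mod_cast hτ0)
  set p := cauchyPowerSeries g 0 (τ' : ℝ) with hp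
  -- coefficients equal fj
  have hcoeff : ∀ j : ℕ, fj j = p.coeff j := by
    intro j
    have h1 := hps.factorial_smul (1:ℂ) j
    rw [hfj j]
    rw [show iteratedDeriv j g 0 = iteratedFDeriv ℂ j g 0 (fun _ => 1) from
      iteratedDeriv_eq_iteratedFDeriv, ← h1]
    rw [FormalMultilinearSeries.coeff]
    field_simp [Nat.factorial_ne_zero]
    rw [nsmul_eq_mul]; rfl
  -- bound on coefficients
  have hcont : Continuous fun θ : ℝ => g (circleMap 0 τ θ) := by
    rw [continuous_iff_continuousAt]
    intro θ
    have h1 : ContinuousAt g (circleMap 0 τ θ) := by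
      refine (hdiff _ ?_).continuousAt
      rw [norm_circleMap_zero, abs_of_pos hτ0]
    exact h1.comp (continuous_circleMap 0 τ).continuousAt
  have hint : (∫ θ in (0:ℝ)..2*Real.pi, ‖g (circleMap 0 τ θ)‖) ≤ (2*Real.pi) * M := by
    have h2π : (0:ℝ) ≤ 2*Real.pi := by positivity
    calc (∫ θ in (0:ℝ)..2*Real.pi, ‖g (circleMap 0 τ θ)‖)
        ≤ ∫ _ in (0:ℝ)..2*Real.pi, M := by
          refine intervalIntegral.integral_mono_on h2π
            (hcont.norm.intervalIntegrable _ _) intervalIntegrable_const ?_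
          intro θ _
          rw [hg]
          refine hM _ ?_
          rw [add_sub_cancel_left, norm_mul, Complex.norm_real, Real.norm_eq_abs, norm_circleMap_zero,
            abs_of_pos hR, abs_of_pos hτ0]
          ring
      _ = (2*Real.pi) * M := by simp [mul_comm]
  have habs : ∀ j : ℕ, ‖fj j‖ ≤ M * (1/τ)^j := by
    intro j
    rw [hcoeff j]
    have h1 : ‖p.coeff j‖ ≤ ‖p j‖ := by
      rw [FormalMultilinearSeries.coeff]
      calc ‖p j (fun _ => (1:ℂ))‖ ≤ ‖p j‖ * ∏ _i : Fin j, ‖(1:ℂ)‖ :=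
            (p j).le_opNorm _
        _ = ‖p j‖ := by simp
    have h2 := norm_cauchyPowerSeries_le g 0 (τ' : ℝ) j
    refine h1.trans (h2.trans ?_)
    have hτabs : |(τ' : ℝ)|⁻¹ = 1/τ := by
      rw [hτ'c, abs_of_pos hτ0, one_div]
    rw [hτabs]
    have hfac : (2*Real.pi)⁻¹ * (∫ θ in (0:ℝ)..2*Real.pi, ‖g (circleMap 0 (τ':ℝ) θ)‖) ≤ M := by
      rw [hτ'c]
      rw [inv_mul_le_iff₀ (by positivity)]
      calc (∫ θ in (0:ℝ)..2*Real.pi, ‖g (circleMap 0 τ θ)‖) ≤ (2*Real.pi) * M := hint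
        _ = 2*Real.pi*M := by ring
    exact mul_le_mul_of_nonneg_right hfac (by positivity)
  -- band structure of B
  have hBband : ∀ k' ℓ' : Fin n,
      ((ℓ' : ℕ) - (k' : ℕ) > β ∨ (k' : ℕ) - (ℓ' : ℕ) > γ) → B k' ℓ' = 0 := by
    intro k' ℓ' h
    have hne : k' ≠ ℓ' := by
      rintro rfl; omega
    rw [hB]
    simp [Matrix.sub_apply, Matrix.one_apply_ne hne, hband k' ℓ' h]
  -- entries of powers below ξ vanish
  have hpow0 : ∀ j : ℕ, j < ξ → (B ^ j) k ℓ = 0 := by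
    intro j hj
    refine band_pow_zero B β γ hBband j k ℓ ?_
    by_cases hkl' : (k : ℕ) < (ℓ : ℕ)
    · left
      rw [hξ, if_pos hkl'] at hj
      by_contra hcon
      push_neg at hcon
      have : ((ℓ : ℕ) - (k : ℕ)) ⌈/⌉ β ≤ j := by
        rw [ceilDiv_le_iff_le_mul (by omega : 0 < β), mul_comm]
        omega
      omega
    · right
      rw [hξ, if_neg hkl'] at hj
      by_contra hcon
      push_neg at hcon
      have : ((k : ℕ) - (ℓ : ℕ)) ⌈/⌉ γ ≤ j := by
        rw [ceilDiv_le_iff_le_mul (by omega : 0 < γ), mul_comm]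
        omega
      omega
  -- entrywise sum
  have hE : ∃ E : Matrix (Fin n) (Fin n) ℂ →L[ℂ] ℂ, ∀ M, E M = M k ℓ := by
    refine ⟨LinearMap.mkContinuous
      { toFun := fun M => M k ℓ
        map_add' := fun M N => rfl
        map_smul' := fun r M => rfl } 1
      (fun M => by rw [one_mul]; exact entry_norm_le_l2 M k ℓ), fun M => rfl⟩
  obtain ⟨E, hEdef⟩ := hE
  have key : HasSum (fun j : ℕ => fj j * (B ^ j) k ℓ) (F k ℓ) := by
    have := hF.mapL E
    simpa [hEdef, smul_eq_mul] using this
  have hzero : ∀ j < ξ, fj j * (B ^ j) k ℓ = 0 := by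
    intro j hj; rw [hpow0 j hj, mul_zero]
  have key2 : HasSum (fun i : ℕ => fj (i + ξ) * (B ^ (i + ξ)) k ℓ) (F k ℓ) := by
    refine (hasSum_nat_add_iff (f := fun j : ℕ => fj j * (B ^ j) k ℓ) ξ).2 ?_
    have hz : (∑ i ∈ Finset.range ξ, fj i * (B ^ i) k ℓ) = 0 :=
      Finset.sum_eq_zero fun i hi => hzero i (Finset.mem_range.1 hi)
    rw [hz, add_zero]
    exact key
  -- term bounds
  have hb : ∀ i : ℕ, ‖fj (i + ξ) * (B ^ (i + ξ)) k ℓ‖ ≤ (2 * M * (1/τ)^ξ) * (1/τ)^i := by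
    intro i
    rw [norm_mul]
    have h1 : ‖fj (i + ξ)‖ ≤ M * (1/τ)^(i+ξ) := by
      exact habs (i + ξ)
    have h2 : ‖(B ^ (i + ξ)) k ℓ‖ ≤ 2 :=
      (entry_norm_le_l2 _ k ℓ).trans (hpow (i + ξ))
    calc ‖fj (i + ξ)‖ * ‖(B ^ (i + ξ)) k ℓ‖
        ≤ (M * (1/τ)^(i+ξ)) * 2 := by
          refine mul_le_mul h1 h2 (norm_nonneg _) (by positivity)
      _ = (2 * M * (1/τ)^ξ) * (1/τ)^i := by rw [pow_add]; ring
  have hgeo : HasSum (fun i : ℕ => (2 * M * (1/τ)^ξ) * (1/τ)^i)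
      ((2 * M * (1/τ)^ξ) * (1 - 1/τ)⁻¹) := by
    refine (hasSum_geometric_of_lt_one (by positivity) ?_).mul_left _
    rw [div_lt_one hτ0]; linarith
  have hsummable : Summable fun i : ℕ => ‖fj (i + ξ) * (B ^ (i + ξ)) k ℓ‖ :=
    Summable.of_nonneg_of_le (fun i => norm_nonneg _) hb hgeo.summable
  have hfinal : ‖F k ℓ‖ ≤ (2 * M * (1/τ)^ξ) * (1 - 1/τ)⁻¹ := by
    calc ‖F k ℓ‖ = ‖∑' i : ℕ, fj (i + ξ) * (B ^ (i + ξ)) k ℓ‖ := by rw [key2.tsum_eq]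
      _ ≤ ∑' i : ℕ, ‖fj (i + ξ) * (B ^ (i + ξ)) k ℓ‖ := norm_tsum_le_tsum_norm hsummable
      _ ≤ ∑' i : ℕ, (2 * M * (1/τ)^ξ) * (1/τ)^i :=
          Summable.tsum_le_tsum hb hsummable hgeo.summable
      _ = (2 * M * (1/τ)^ξ) * (1 - 1/τ)⁻¹ := hgeo.tsum_eq
  have heq : (2 * M * (1/τ)^ξ) * (1 - 1/τ)⁻¹ = 2 * (τ / (τ - 1)) * M * (1 / τ) ^ ξ := by
    have hτ1 : τ - 1 ≠ 0 := by intro h; linarith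
    have h2 : (1 - 1/τ) = (τ-1)/τ := by field_simp
    rw [h2, inv_div]
    ring
  rw [← heq]
  exact hfinal
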